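/- Let n ≥ 2 and 1 ≤ n_co ≤ n be natural numbers, set n_p = n − n_co, and let g^cp be the adjacency matrix of the core-periphery network on n vertices with core size n_co. Let λ be a real number such that D := 1 − λ·(n_co − 1) − λ²·n_p·n_co ≠ 0, and define a_co = (1 + λ·n_p)/D and a_p = 1 + λ·n_co·a_co. Then the vector a ∈ ℝ^n whose entries equal a_co on the core vertices and a_p on the peripheral vertices satisfies the complete-information Nash (Katz–Bonacich) system a = 𝟙 + λ·g^cp·a. -/

import Mathlib

/-- On the core-periphery network with core size `n_co` (core vertices are
linked to everyone else; peripheral vertices are linked exactly to the core), the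
vector taking value `a_co = (1 + λ n_p)/D` on the core (with
`D = 1 - λ(n_co - 1) - λ² n_p n_co ≠ 0`) and `a_p = 1 + λ n_co a_co` on the periphery
solves the Katz–Bonacich system `a = 𝟙 + λ • g.mulVec a`. -/
theorem stmt_3 (n n_co : ℕ) (hn : 2 ≤ n) (h1 : 1 ≤ n_co) (h2 : n_co ≤ n)
    (lam : ℝ)
    (g : Matrix (Fin n) (Fin n) ℝ)
    (hg : ∀ i j : Fin n, g i j =
      if i = j then 0 else if (i : ℕ) < n_co ∨ (j : ℕ) < n_co then 1 else 0)
    (D a_co a_p : ℝ)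
    (hD : D = 1 - lam * ((n_co : ℝ) - 1) - lam ^ 2 * ((n : ℝ) - (n_co : ℝ)) * (n_co : ℝ))
    (hD0 : D ≠ 0)
    (hco : a_co = (1 + lam * ((n : ℝ) - (n_co : ℝ))) / D)
    (hp : a_p = 1 + lam * (n_co : ℝ) * a_co)
    (a : Fin n → ℝ)
    (ha : ∀ i : Fin n, a i = if (i : ℕ) < n_co then a_co else a_p) :
    a = (fun _ => (1 : ℝ)) + lam • g.mulVec a := by
  funext i
  simp only [Pi.add_apply, Pi.smul_apply, smul_eq_mul, Matrix.mulVec, dotProduct]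
  set F : ℕ → ℝ := fun k =>
    (if (i : ℕ) = k then 0 else if (i : ℕ) < n_co ∨ k < n_co then (1:ℝ) else 0) *
      (if k < n_co then a_co else a_p) with hF
  have hterm : ∀ j : Fin n, g i j * a j = F (j : ℕ) := by
    intro j
    rw [hg, ha, hF]
    simp only [Fin.ext_iff]
  have hsum : ∑ j, g i j * a j = ∑ k ∈ Finset.range n, F k := by
    rw [← Fin.sum_univ_eq_sum_range]
    exact Finset.sum_congr rfl fun j _ => hterm j
  have hsplit : ∑ k ∈ Finset.range n, F k =
      ∑ k ∈ Finset.range n_co, F k + ∑ k ∈ Finset.Ico n_co n, F k := by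
    rw [Finset.range_eq_Ico, ← Finset.sum_Ico_consecutive F (Nat.zero_le n_co) h2,
      ← Finset.range_eq_Ico]
  by_cases hi : (i : ℕ) < n_co
  · have h1' : ∑ k ∈ Finset.range n_co, F k = (n_co : ℝ) * a_co - a_co := by
      have : ∀ k ∈ Finset.range n_co, F k = a_co - (if (i:ℕ) = k then a_co else 0) := by
        intro k hk
        simp only [Finset.mem_range] at hk
        simp [hF, hk]
        split <;> simp
      rw [Finset.sum_congr rfl this, Finset.sum_sub_distrib, Finset.sum_const,
        Finset.sum_ite_eq, if_pos (Finset.mem_range.mpr hi), Finset.card_range]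
      push_cast
      ring
    have h2' : ∑ k ∈ Finset.Ico n_co n, F k = ((n : ℝ) - n_co) * a_p := by
      have : ∀ k ∈ Finset.Ico n_co n, F k = a_p := by
        intro k hk
        simp only [Finset.mem_Ico] at hk
        have hik : (i : ℕ) ≠ k := by omega
        have hk' : ¬ k < n_co := by omega
        simp [hF, hik, hk', hi]
      rw [Finset.sum_congr rfl this, Finset.sum_const, Nat.card_Ico]
      rw [nsmul_eq_mul, Nat.cast_sub h2]
    rw [ha, hsum, hsplit, h1', h2', if_pos hi]
    rw [hp, hco, hD] at *
    linear_combination div_mul_cancel₀ (1 + lam * ((n : ℝ) - (n_co : ℝ))) hD0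
  · have h1' : ∑ k ∈ Finset.range n_co, F k = (n_co : ℝ) * a_co := by
      have : ∀ k ∈ Finset.range n_co, F k = a_co := by
        intro k hk
        simp only [Finset.mem_range] at hk
        have hik : (i : ℕ) ≠ k := by omega
        simp [hF, hik, hk]
      rw [Finset.sum_congr rfl this, Finset.sum_const, Finset.card_range]
      push_cast
      ring
    have h2' : ∑ k ∈ Finset.Ico n_co n, F k = 0 := by
      apply Finset.sum_eq_zero
      intro k hk
      simp only [Finset.mem_Ico] at hk
      have hk' : ¬ k < n_co := by omega
      simp [hF, hk', hi]
    rw [ha, hsum, hsplit, h1', h2', if_neg hi, hp]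
    ring
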